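/- Assume Δ = 0 and γ ≠ 4. Then for all λ, μ ∈ K: s₁ ∘ τ(λ,μ) ∘ s₁ = τ(λ + ω·α, μ + ω·β) where ω := −(λ(l+2) + μ(m+2))/(4−γ); s₂ ∘ τ(λ,μ) ∘ s₂ = τ(−λ, μ + λ·l); and s₃ ∘ τ(λ,μ) ∘ s₃ = τ(λ + μ·m, −μ). In particular each sᵢ normalizes the group of all maps τ(λ,μ). -/

import Mathlib

noncomputable section

variable {K : Type*} [Field K] [CharZero K]

/-- The linear functional `x ↦ c 0 * x 0 + c 1 * x 1 + c 2 * x 2` on `K³`. -/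
def lf (c : Fin 3 → K) : (Fin 3 → K) →ₗ[K] K :=
  c 0 • LinearMap.proj 0 + c 1 • LinearMap.proj 1 + c 2 • LinearMap.proj 2

/-- `s₁ : x ↦ x − (2x₁ − α x₂ − β x₃)·a₁` where `a₁ = Pi.single 0 1`. -/
def s1 (α β : K) : Module.End K (Fin 3 → K) :=
  LinearMap.id - (lf ![2, -α, -β]).smulRight (Pi.single 0 1)

/-- `s₂ : x ↦ x − (−x₁ + 2x₂ − l·x₃)·a₂`. -/
def s2 (l : K) : Module.End K (Fin 3 → K) :=
  LinearMap.id - (lf ![-1, 2, -l]).smulRight (Pi.single 1 1)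

/-- `s₃ : x ↦ x − (−x₁ − m·x₂ + 2x₃)·a₃`. -/
def s3 (m : K) : Module.End K (Fin 3 → K) :=
  LinearMap.id - (lf ![-1, -m, 2]).smulRight (Pi.single 2 1)

/-- `b = b₁ = (4−γ)a₁ + (l+2)a₂ + (m+2)a₃`, with `γ = l·m`. -/
def bvec (l m : K) : Fin 3 → K := ![4 - l * m, l + 2, m + 2]

/-- `b₂ = (2α+βm)a₁ + (4−β)a₂ + (α+2m)a₃`. -/
def b2vec (α β l m : K) : Fin 3 → K := ![2*α + β*m, 4 - β, α + 2*m]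

/-- `b₃ = (2β+αl)a₁ + (β+2l)a₂ + (4−α)a₃`. -/
def b3vec (α β l m : K) : Fin 3 → K := ![2*β + α*l, β + 2*l, 4 - α]

/-- `τ(λ,μ) : a₁ ↦ a₁ + ω·b, a₂ ↦ a₂ + λ·b, a₃ ↦ a₃ + μ·b`,
where `ω = −(λ(l+2) + μ(m+2))/(4−γ)`. -/
def tau (l m lam mu : K) : Module.End K (Fin 3 → K) :=
  LinearMap.id +
    (lf ![-(lam*(l+2) + mu*(m+2))/(4 - l*m), lam, mu]).smulRight (bvec l m)

/-- `τ` applied to a vector `(λ,μ) ∈ K²`. -/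
def tauv (l m : K) (v : K × K) : Module.End K (Fin 3 → K) := tau l m v.1 v.2

def c1 (α β : K) : K × K := (α, β)
def c2 (l : K) : K × K := (-2, l)
def c3 (m : K) : K × K := (m, -2)

/-- `z₁ : a₁ ↦ −a₁ + (2/(4−γ))·b, a₂ ↦ −a₂, a₃ ↦ −a₃`. -/
def z1 (l m : K) : Module.End K (Fin 3 → K) :=
  -LinearMap.id + (lf ![2/(4 - l*m), 0, 0]).smulRight (bvec l m)

/-- `z₂ : a₂ ↦ −a₂ + (2/(l+2))·b, a₁ ↦ −a₁, a₃ ↦ −a₃`. -/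
def z2 (l m : K) : Module.End K (Fin 3 → K) :=
  -LinearMap.id + (lf ![0, 2/(l+2), 0]).smulRight (bvec l m)

/-- `z₃ : a₃ ↦ −a₃ + (2/(m+2))·b, a₁ ↦ −a₁, a₂ ↦ −a₂`. -/
def z3 (l m : K) : Module.End K (Fin 3 → K) :=
  -LinearMap.id + (lf ![0, 0, 2/(m+2)]).smulRight (bvec l m)

/-- The linear functional `(λ,μ) ↦ c.1·λ + c.2·μ` on `K²`. -/
def lf2 (c : K × K) : (K × K) →ₗ[K] K := c.1 • LinearMap.fst K K K + c.2 • LinearMap.snd K K K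

/-- `σ₁(λ,μ) = (λ,μ) − ((λ(l+2)+μ(m+2))/(4−γ))·(α,β)`. -/
def sigma1 (α β l m : K) : Module.End K (K × K) :=
  LinearMap.id - (lf2 ((l+2)/(4 - l*m), (m+2)/(4 - l*m))).smulRight (α, β)

/-- `σ₂(λ,μ) = (λ,μ) + λ·(−2,l)`. -/
def sigma2 (l : K) : Module.End K (K × K) :=
  LinearMap.id + (LinearMap.fst K K K).smulRight ((-2 : K), l)

/-- `σ₃(λ,μ) = (λ,μ) + μ·(m,−2)`. -/
def sigma3 (m : K) : Module.End K (K × K) :=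
  LinearMap.id + (LinearMap.snd K K K).smulRight (m, (-2 : K))

/-- The sequence `u_x` : `u_x(0)=0, u_x(1)=u_x(2)=1, u_x(3)=x−1,
u_x(n+4) = (x−2)·u_x(n+2) − u_x(n)`. -/
def useq (x : K) : ℕ → K
  | 0 => 0
  | 1 => 1
  | 2 => 1
  | 3 => x - 1
  | (n+4) => (x - 2) * useq x (n+2) - useq x n


lemma conj_lemma (g f : (Fin 3 → K) →ₗ[K] K) (w v : Fin 3 → K) (hgw : g w = 2) :
    (LinearMap.id - g.smulRight w) * (LinearMap.id + f.smulRight v) *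
      (LinearMap.id - g.smulRight w)
    = LinearMap.id +
        (f ∘ₗ (LinearMap.id - g.smulRight w)).smulRight
          ((LinearMap.id - g.smulRight w : Module.End K (Fin 3 → K)) v) := by
  apply LinearMap.ext; intro x
  simp only [Module.End.mul_apply, LinearMap.add_apply, LinearMap.sub_apply,
    LinearMap.id_apply, LinearMap.smulRight_apply, LinearMap.comp_apply,
    map_add, map_sub, map_smul, hgw, smul_eq_mul]
  module

/-- if `Δ = 0` and `γ ≠ 4` then, with `ω = −(λ(l+2)+μ(m+2))/(4−γ)`,
`s₁ ∘ τ(λ,μ) ∘ s₁ = τ(λ+ωα, μ+ωβ)`, `s₂ ∘ τ(λ,μ) ∘ s₂ = τ(−λ, μ+λl)` and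
`s₃ ∘ τ(λ,μ) ∘ s₃ = τ(λ+μm, −μ)`; in particular each `sᵢ` normalizes `{τ(λ,μ)}`. -/
theorem stmt5 (α β l m : K)
    (hΔ : 8 - 2*α - 2*β - 2*(l*m) - (α*l + β*m) = 0) (hγ : l*m ≠ 4)
    (lam mu : K) :
    s1 α β * tau l m lam mu * s1 α β
      = tau l m (lam + (-(lam*(l+2) + mu*(m+2))/(4 - l*m)) * α)
               (mu + (-(lam*(l+2) + mu*(m+2))/(4 - l*m)) * β) ∧
    s2 l * tau l m lam mu * s2 l = tau l m (-lam) (mu + lam*l) ∧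
    s3 m * tau l m lam mu * s3 m = tau l m (lam + mu*m) (-mu) := by
  have h4 : (4 : K) - l*m ≠ 0 := sub_ne_zero_of_ne (Ne.symm hγ)
  set w : K := -(lam*(l+2) + mu*(m+2))/(4 - l*m) with hw
  have simpset := 0
  refine ⟨?_, ?_, ?_⟩
  · have hD1 : -((lam + w * α)*(l+2) + (mu + w * β)*(m+2))/(4 - l*m) = -w := by
      have hw' : w * (4 - l*m) = -(lam*(l+2) + mu*(m+2)) := by rw [hw, div_mul_cancel₀ _ h4]
      rw [div_eq_iff h4]; linear_combination (-1 : K) * hw' + w * hΔ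
    rw [s1, tau, conj_lemma _ _ _ _ (by simp [lf]), tau, hD1]
    congr 1
    have hv : (LinearMap.id - (lf ![2, -α, -β]).smulRight (Pi.single 0 1) : Module.End K (Fin 3 → K)) (bvec l m)
        = bvec l m := by
      funext i
      fin_cases i <;>
        · simp only [LinearMap.sub_apply, LinearMap.id_apply, LinearMap.smulRight_apply,
            lf, bvec, LinearMap.add_apply, LinearMap.smul_apply, LinearMap.proj_apply,
            Pi.sub_apply, Pi.smul_apply, smul_eq_mul, Matrix.cons_val_zero,
            Matrix.cons_val_one, Matrix.head_cons, Matrix.cons_val_two, Matrix.tail_cons,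
            Fin.isValue, Pi.single_apply]
          norm_num [Fin.ext_iff] <;> linear_combination hΔ
    rw [hv]
    congr 1
    apply LinearMap.ext; intro x
    simp only [LinearMap.comp_apply, LinearMap.sub_apply, LinearMap.id_apply,
      LinearMap.smulRight_apply, lf, LinearMap.add_apply, LinearMap.smul_apply,
      LinearMap.proj_apply, Pi.sub_apply, Pi.smul_apply, smul_eq_mul,
      Matrix.cons_val_zero, Matrix.cons_val_one, Matrix.head_cons, Matrix.cons_val_two,
      Matrix.tail_cons, Fin.isValue, Pi.single_apply]
    norm_num [Fin.ext_iff]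
    ring
  · have hD2 : -((-lam)*(l+2) + (mu + lam*l)*(m+2))/(4 - l*m) = w + lam := by
      rw [hw]; field_simp; ring
    rw [s2, tau, conj_lemma _ _ _ _ (by simp [lf]), tau, hD2]
    congr 1
    have hv : (LinearMap.id - (lf ![-1, 2, -l]).smulRight (Pi.single 1 1) : Module.End K (Fin 3 → K)) (bvec l m)
        = bvec l m := by
      funext i
      fin_cases i <;>
        · simp only [LinearMap.sub_apply, LinearMap.id_apply, LinearMap.smulRight_apply,
            lf, bvec, LinearMap.add_apply, LinearMap.smul_apply, LinearMap.proj_apply,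
            Pi.sub_apply, Pi.smul_apply, smul_eq_mul, Matrix.cons_val_zero,
            Matrix.cons_val_one, Matrix.head_cons, Matrix.cons_val_two, Matrix.tail_cons,
            Fin.isValue, Pi.single_apply]
          norm_num [Fin.ext_iff] <;> ring
    rw [hv]
    congr 1
    apply LinearMap.ext; intro x
    simp only [LinearMap.comp_apply, LinearMap.sub_apply, LinearMap.id_apply,
      LinearMap.smulRight_apply, lf, LinearMap.add_apply, LinearMap.smul_apply,
      LinearMap.proj_apply, Pi.sub_apply, Pi.smul_apply, smul_eq_mul,
      Matrix.cons_val_zero, Matrix.cons_val_one, Matrix.head_cons, Matrix.cons_val_two,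
      Matrix.tail_cons, Fin.isValue, Pi.single_apply]
    norm_num [Fin.ext_iff]
    ring
  · have hD3 : -((lam + mu*m)*(l+2) + (-mu)*(m+2))/(4 - l*m) = w + mu := by
      have hw' : w * (4 - l*m) = -(lam*(l+2) + mu*(m+2)) := by rw [hw, div_mul_cancel₀ _ h4]
      rw [div_eq_iff h4]; linear_combination (-1 : K) * hw'
    rw [s3, tau, conj_lemma _ _ _ _ (by simp [lf]), tau, hD3]
    congr 1
    have hv : (LinearMap.id - (lf ![-1, -m, 2]).smulRight (Pi.single 2 1) : Module.End K (Fin 3 → K)) (bvec l m)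
        = bvec l m := by
      funext i
      fin_cases i <;>
        · simp only [LinearMap.sub_apply, LinearMap.id_apply, LinearMap.smulRight_apply,
            lf, bvec, LinearMap.add_apply, LinearMap.smul_apply, LinearMap.proj_apply,
            Pi.sub_apply, Pi.smul_apply, smul_eq_mul, Matrix.cons_val_zero,
            Matrix.cons_val_one, Matrix.head_cons, Matrix.cons_val_two, Matrix.tail_cons,
            Fin.isValue, Pi.single_apply]
          norm_num [Fin.ext_iff] <;> ring
    rw [hv]
    congr 1
    apply LinearMap.ext; intro x
    simp only [LinearMap.comp_apply, LinearMap.sub_apply, LinearMap.id_apply,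
      LinearMap.smulRight_apply, lf, LinearMap.add_apply, LinearMap.smul_apply,
      LinearMap.proj_apply, Pi.sub_apply, Pi.smul_apply, smul_eq_mul,
      Matrix.cons_val_zero, Matrix.cons_val_one, Matrix.head_cons, Matrix.cons_val_two,
      Matrix.tail_cons, Fin.isValue, Pi.single_apply]
    norm_num [Fin.ext_iff]
    ring

end
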